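/- Let r ≥ 1, b ≥ 1, n ≥ 2^{r+1}, q = 2^b, and 0 ≤ i ≤ r−1. Let (M_1, …, M_{2^{i+1}−1}) and (K_1, …, K_{2^{i+1}−1}) be two families of matrices in F_q^{n×n}, each matrix of rank exactly 2^{r−i}, such that within each family the row spaces of the members form a direct (independent) family of subspaces of F_q^n and likewise their column spaces form a direct family. For 0 ≤ j ≤ i set M̂_j = Σ_{k : G_Had^{(i)}(k,j)=1} M_k and K̂_j = Σ_{k : G_Had^{(i)}(k,j)=1} K_k. If the F₂-linear spans satisfy span_{F₂}{M̂_0, …, M̂_i} = span_{F₂}{K̂_0, …, K̂_i} (as F₂-subspaces of F_q^{n×n}), then {M_1, …, M_{2^{i+1}−1}} = {K_1, …, K_{2^{i+1}−1}} as sets. (Uniqueness of the minimal matrix set of a face.) -/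

import Mathlib

/-- The generator matrix `G_Had^{(i)}` of the length-`2^{i+1}−1` Hadamard code:
the entry in row `k` (zero-indexed; corresponding to the 1-indexed row `k+1`) and
column `j` is bit number `i − j` of the binary representation of `2^{i+1} − (k+1)`. -/
def GHad (i : ℕ) : Matrix (Fin (2 ^ (i + 1) - 1)) (Fin (i + 1)) (ZMod 2) :=
  fun k j => if Nat.testBit (2 ^ (i + 1) - (k.val + 1)) (i - j.val) then 1 else 0

/-- The row space of a square matrix: the span of its rows. -/
def rowSpace {F : Type*} [Field F] {n : ℕ} (M : Matrix (Fin n) (Fin n) F) :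
    Submodule F (Fin n → F) :=
  Submodule.span F (Set.range fun a => M a)

/-- The column space of a square matrix: the span of its columns. -/
def colSpace {F : Type*} [Field F] {n : ℕ} (M : Matrix (Fin n) (Fin n) F) :
    Submodule F (Fin n → F) :=
  Submodule.span F (Set.range fun a => fun b => M b a)

namespace Stmt7Aux

open Matrix Finset Submodule Module

variable {F : Type*} [Field F] {n : ℕ}

/-- The dot-product bilinear form on `Fin n → F`. -/
noncomputable def dotB (F : Type*) [Field F] (n : ℕ) :
    LinearMap.BilinForm F (Fin n → F) :=
  LinearMap.mk₂ F (fun x y => dotProduct x y)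
    (by intros; simp [add_dotProduct])
    (by intros; simp [smul_dotProduct])
    (by intros; simp [dotProduct_add])
    (by intros; simp [dotProduct_smul])

@[simp] lemma dotB_apply (x y : Fin n → F) : dotB F n x y = dotProduct x y := rfl

lemma dotB_refl : (dotB F n).IsRefl := by
  intro x y h
  simpa [dotProduct_comm] using h

lemma dotB_nondeg : (dotB F n).Nondegenerate := by
  refine (LinearMap.IsRefl.nondegenerate_iff_separatingLeft (B := dotB F n) dotB_refl).mpr ?_
  intro x hx
  funext j
  have := hx (Pi.single j 1)
  rw [dotB_apply, dotProduct_single, mul_one] at this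
  simpa using this

lemma rowSpace_eq_range (M : Matrix (Fin n) (Fin n) F) :
    rowSpace M = LinearMap.range M.vecMulLinear :=
  (range_vecMulLinear M).symm

lemma vecMul_eq_zero_of_mem_orth {A : Matrix (Fin n) (Fin n) F} {x : Fin n → F}
    (hx : x ∈ (dotB F n).orthogonal (colSpace A)) : x ᵥ* A = 0 := by
  funext j
  have hcol : (fun b => A b j) ∈ colSpace A := Submodule.subset_span ⟨j, rfl⟩
  have := hx _ hcol
  rw [dotB_apply] at this
  show dotProduct x (fun b => A b j) = 0
  rwa [dotProduct_comm]

lemma mem_orth_of_vecMul_eq_zero {A : Matrix (Fin n) (Fin n) F} {x : Fin n → F}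
    (hx : x ᵥ* A = 0) : x ∈ (dotB F n).orthogonal (colSpace A) := by
  intro y hy
  show dotB F n y x = 0
  induction hy using Submodule.span_induction with
  | mem y hy =>
      obtain ⟨j, rfl⟩ := hy
      have := congrFun hx j
      rw [dotB_apply, dotProduct_comm]
      exact this
  | zero => simp
  | add y z _ _ hy hz => rw [map_add, LinearMap.add_apply, hy, hz, add_zero]
  | smul a y _ hy => rw [_root_.map_smul, LinearMap.smul_apply, hy, smul_zero]

lemma orth_inf (U W : Submodule F (Fin n → F)) :
    (dotB F n).orthogonal U ⊓ (dotB F n).orthogonal W = (dotB F n).orthogonal (U ⊔ W) := by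
  apply le_antisymm
  · rintro x ⟨hxU, hxW⟩
    intro y hy
    obtain ⟨u, hu, w, hw, rfl⟩ := Submodule.mem_sup.mp hy
    rw [map_add, LinearMap.add_apply]
    rw [hxU u hu, hxW w hw, add_zero]
  · exact le_inf (LinearMap.BilinForm.orthogonal_le le_sup_left)
      (LinearMap.BilinForm.orthogonal_le le_sup_right)

lemma finrank_orth (U : Submodule F (Fin n → F)) :
    finrank F ((dotB F n).orthogonal U) = n - finrank F U := by
  rw [LinearMap.BilinForm.finrank_orthogonal dotB_nondeg U, finrank_fin_fun]

lemma orth_sup_orth_eq_top {U W : Submodule F (Fin n → F)} (h : U ⊓ W = ⊥) :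
    (dotB F n).orthogonal U ⊔ (dotB F n).orthogonal W = ⊤ := by
  have hUW : finrank F (U ⊔ W : Submodule F (Fin n → F)) = finrank F U + finrank F W := by
    have := Submodule.finrank_sup_add_finrank_inf_eq U W
    rw [h, finrank_bot] at this
    omega
  have hle : finrank F (U ⊔ W : Submodule F (Fin n → F)) ≤ n := by
    simpa [finrank_fin_fun] using Submodule.finrank_le (U ⊔ W : Submodule F (Fin n → F))
  have hUle : finrank F U ≤ n := le_trans (by rw [hUW]; omega) hle
  have hWle : finrank F W ≤ n := le_trans (by rw [hUW]; omega) hle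
  have h1 := Submodule.finrank_sup_add_finrank_inf_eq
    ((dotB F n).orthogonal U) ((dotB F n).orthogonal W)
  rw [orth_inf, finrank_orth, finrank_orth, finrank_orth, hUW] at h1
  apply Submodule.eq_top_of_finrank_eq
  rw [finrank_fin_fun]
  omega

lemma vecMul_finset_sum {m : ℕ} (x : Fin n → F) (S : Finset (Fin m))
    (X : Fin m → Matrix (Fin n) (Fin n) F) :
    x ᵥ* (∑ k ∈ S, X k) = ∑ k ∈ S, x ᵥ* X k := by
  classical
  induction S using Finset.induction_on with
  | empty => simp [Matrix.vecMul_zero]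
  | insert _ _ ha ih =>
      rw [Finset.sum_insert ha, Finset.sum_insert ha, Matrix.vecMul_add, ih]

/-- Key lemma: if the column spaces are independent, the row space of each summand is
contained in the row space of the sum. -/
lemma rowSpace_le_rowSpace_sum {m : ℕ} (X : Fin m → Matrix (Fin n) (Fin n) F)
    (hcol : ∀ k, colSpace (X k) ⊓ (⨆ (k') (_ : k' ≠ k), colSpace (X k')) = ⊥)
    (S : Finset (Fin m)) {k₀ : Fin m} (hk₀ : k₀ ∈ S) :
    rowSpace (X k₀) ≤ rowSpace (∑ k ∈ S, X k) := by
  classical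
  set B := dotB F n with hB
  set U := colSpace (X k₀) with hU
  set W : Submodule F (Fin n → F) := ⨆ (k') (_ : k' ≠ k₀), colSpace (X k') with hW
  have htop : B.orthogonal U ⊔ B.orthogonal W = ⊤ := orth_sup_orth_eq_top (hcol k₀)
  intro y hy
  rw [rowSpace_eq_range] at hy ⊢
  obtain ⟨x, hx⟩ := hy
  have hxtop : x ∈ B.orthogonal U ⊔ B.orthogonal W := htop ▸ Submodule.mem_top
  obtain ⟨u, hu, p, hp, hx'⟩ := Submodule.mem_sup.mp hxtop
  refine ⟨p, ?_⟩
  have hu0 : u ᵥ* X k₀ = 0 := vecMul_eq_zero_of_mem_orth hu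
  have hp0 : ∀ k, k ≠ k₀ → p ᵥ* X k = 0 := by
    intro k hk
    have hle : colSpace (X k) ≤ W := le_iSup₂ (f := fun k' (_ : k' ≠ k₀) => colSpace (X k')) k hk
    exact vecMul_eq_zero_of_mem_orth (LinearMap.BilinForm.orthogonal_le hle hp)
  have : p ᵥ* (∑ k ∈ S, X k) = p ᵥ* X k₀ := by
    rw [vecMul_finset_sum]
    exact Finset.sum_eq_single_of_mem k₀ hk₀ (fun k _ hk => hp0 k hk)
  rw [Matrix.vecMulLinear_apply, this]
  rw [Matrix.vecMulLinear_apply] at hx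
  rw [← hx, ← hx', Matrix.add_vecMul, hu0, zero_add]

lemma exists_repr_of_mem_biSup {V : Type*} [AddCommGroup V] [Module F V]
    {ι : Type*} [DecidableEq ι] (U : ι → Submodule F V) (S : Finset ι) (x : V)
    (hx : x ∈ ⨆ k ∈ S, U k) :
    ∃ u : ι → V, (∀ k, u k ∈ U k) ∧ x = ∑ k ∈ S, u k := by
  classical
  induction S using Finset.induction_on generalizing x with
  | empty =>
      have : (⨆ k ∈ (∅ : Finset ι), U k) = ⊥ := by simp
      rw [this, Submodule.mem_bot] at hx
      exact ⟨0, fun k => Submodule.zero_mem _, by simp [hx]⟩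
  | @insert a S ha ih =>
      rw [Finset.iSup_insert] at hx
      obtain ⟨y, hy, z, hz, rfl⟩ := Submodule.mem_sup.mp hx
      obtain ⟨u, hu, rfl⟩ := ih z hz
      refine ⟨Function.update u a y, ?_, ?_⟩
      · intro k
        rcases eq_or_ne k a with rfl | hk
        · rw [Function.update_self]; exact hy
        · rw [Function.update_of_ne hk]; exact hu k
      · rw [Finset.sum_insert ha, Function.update_self]
        congr 1
        exact (Finset.sum_congr rfl fun k hk =>
          (Function.update_of_ne (by rintro rfl; exact ha hk) y u).symm)

lemma sum_mem_biSup {V : Type*} [AddCommGroup V] [Module F V]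
    {ι : Type*} (U : ι → Submodule F V) (S : Finset ι) (u : ι → V)
    (hu : ∀ k, u k ∈ U k) :
    (∑ k ∈ S, u k) ∈ ⨆ k ∈ S, U k :=
  Submodule.sum_mem _ fun k hk => Submodule.mem_iSup_of_mem k
    (Submodule.mem_iSup_of_mem hk (hu k))

/-- The row space of a finite sum is contained in the sup of the row spaces. -/
lemma rowSpace_sum_le {m : ℕ} (X : Fin m → Matrix (Fin n) (Fin n) F) (S : Finset (Fin m)) :
    rowSpace (∑ k ∈ S, X k) ≤ ⨆ k ∈ S, rowSpace (X k) := by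
  rw [rowSpace, Submodule.span_le]
  rintro _ ⟨a, rfl⟩
  show (∑ k ∈ S, X k) a ∈ _
  rw [show (∑ k ∈ S, X k) a = ∑ k ∈ S, X k a from by funext c; simp [Matrix.sum_apply]]
  exact Submodule.sum_mem _ fun k hk => Submodule.mem_iSup_of_mem k
    (Submodule.mem_iSup_of_mem hk (Submodule.subset_span ⟨a, rfl⟩))

lemma zmod2_cases (a : ZMod 2) : a = 0 ∨ a = 1 := by revert a; decide

/-- Converting a `ZMod 2`-weighted sum into a filtered sum. -/
lemma zmod2_sum_smul {A : Type*} [AddCommMonoid A] [Module (ZMod 2) A]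
    {κ : Type*} [Fintype κ] (ε : κ → ZMod 2) (X : κ → A)
    [DecidablePred fun k => ε k = 1] :
    (∑ k, ε k • X k) = ∑ k ∈ Finset.univ.filter (fun k => ε k = 1), X k := by
  rw [Finset.sum_filter]
  refine Finset.sum_congr rfl fun k _ => ?_
  rcases zmod2_cases (ε k) with h | h <;> simp [h]

/-- Separation of `ZMod 2` linear functionals: if every `c` with `⟨a,c⟩ = 1` also has
`⟨b,c⟩ = 1`, and `a ≠ 0`, then `b = a`. -/
lemma sep_vec {p : ℕ} {a b : Fin p → ZMod 2} (ha : a ≠ 0)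
    (h : ∀ c, dotProduct a c = 1 → dotProduct b c = 1) : b = a := by
  classical
  obtain ⟨j₀, hj₀⟩ : ∃ j₀, a j₀ ≠ 0 := by
    by_contra hcon
    push_neg at hcon
    exact ha (funext fun j => hcon j)
  have haj₀ : a j₀ = 1 := (zmod2_cases (a j₀)).resolve_left hj₀
  set c₀ : Fin p → ZMod 2 := Pi.single j₀ 1 with hc₀def
  have hac₀ : dotProduct a c₀ = 1 := by
    rw [hc₀def, dotProduct_single, mul_one, haj₀]
  have hbc₀ : dotProduct b c₀ = 1 := h c₀ hac₀
  have key : ∀ d, dotProduct b d = dotProduct a d := by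
    intro d
    have hact : dotProduct a (d + (1 + dotProduct a d) • c₀) = 1 := by
      rw [dotProduct_add, dotProduct_smul, hac₀]
      generalize dotProduct a d = t
      revert t; decide
    have hbct := h _ hact
    rw [dotProduct_add, dotProduct_smul, hbc₀] at hbct
    revert hbct
    generalize dotProduct b d = s
    generalize dotProduct a d = t
    revert s t
    decide
  funext j
  have := key (Pi.single j 1)
  rwa [dotProduct_single, dotProduct_single, mul_one, mul_one] at this

/-- Key abstract lemma: the row space of `Y k` is contained in the row space of the
matching `X ks`. -/
lemma rowSpace_le_of_spans {m p : ℕ} (g : Fin m → Fin p → ZMod 2)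
    (X Y : Fin m → Matrix (Fin n) (Fin n) F) (L : (Fin p → ZMod 2) → Fin p → ZMod 2)
    (hstar : ∀ c, (∑ k ∈ Finset.univ.filter fun k => dotProduct (g k) c = 1, Y k)
      = ∑ k ∈ Finset.univ.filter fun k => dotProduct (g k) (L c) = 1, X k)
    (hYcol : ∀ k, colSpace (Y k) ⊓ (⨆ (k') (_ : k' ≠ k), colSpace (Y k')) = ⊥)
    (hXrow : ∀ k, rowSpace (X k) ⊓ (⨆ (k') (_ : k' ≠ k), rowSpace (X k')) = ⊥)
    (k ks : Fin m)
    (hmatch : ∀ c, dotProduct (g ks) (L c) = dotProduct (g k) c)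
    (hsep : ∀ k'', k'' ≠ ks →
      ∃ c, dotProduct (g k) c = 1 ∧ dotProduct (g k'') (L c) = 0)
    (hex : ∃ c, dotProduct (g k) c = 1) :
    rowSpace (Y k) ≤ rowSpace (X ks) := by
  classical
  have hYle : ∀ c, dotProduct (g k) c = 1 → rowSpace (Y k) ≤
      ⨆ k'' ∈ Finset.univ.filter (fun k'' => dotProduct (g k'') (L c) = 1),
        rowSpace (X k'') := by
    intro c hc
    refine le_trans (rowSpace_le_rowSpace_sum Y hYcol
      (Finset.univ.filter fun k' => dotProduct (g k') c = 1)
      (by simp only [Finset.mem_filter]; exact ⟨Finset.mem_univ _, hc⟩)) ?_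
    rw [hstar c]
    exact rowSpace_sum_le X _
  intro x hx
  obtain ⟨c₀, hc₀⟩ := hex
  obtain ⟨u, hu, hxu⟩ := exists_repr_of_mem_biSup (fun k'' => rowSpace (X k'')) _ x
    (hYle c₀ hc₀ hx)
  set T₀ := Finset.univ.filter (fun k'' => dotProduct (g k'') (L c₀) = 1) with hT₀
  have hzero : ∀ k₁ ∈ T₀, k₁ ≠ ks → u k₁ = 0 := by
    intro k₁ hk₁ hne
    obtain ⟨c₁, hc₁, hc₁'⟩ := hsep k₁ hne
    obtain ⟨v, hv, hxv⟩ := exists_repr_of_mem_biSup (fun k'' => rowSpace (X k'')) _ x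
      (hYle c₁ hc₁ hx)
    have h1 : u k₁ = x - ∑ k' ∈ T₀.erase k₁, u k' := by
      rw [hxu, ← Finset.add_sum_erase _ _ hk₁]
      abel
    have h2 : u k₁ ∈ ⨆ (k') (_ : k' ≠ k₁), rowSpace (X k') := by
      rw [h1, hxv]
      refine Submodule.sub_mem _ ?_ ?_
      · refine Submodule.sum_mem _ fun k' hk' => ?_
        have hne' : k' ≠ k₁ := by
          rintro rfl
          have h3 := (Finset.mem_filter.mp hk').2
          rw [hc₁'] at h3
          exact absurd h3 (by decide)
        exact Submodule.mem_iSup_of_mem k' (Submodule.mem_iSup_of_mem hne' (hv k'))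
      · refine Submodule.sum_mem _ fun k' hk' => ?_
        exact Submodule.mem_iSup_of_mem k'
          (Submodule.mem_iSup_of_mem (Finset.ne_of_mem_erase hk') (hu k'))
    have h4 : u k₁ ∈ (⊥ : Submodule F (Fin n → F)) := (hXrow k₁) ▸ ⟨hu k₁, h2⟩
    simpa using h4
  have hks : ks ∈ T₀ := Finset.mem_filter.mpr ⟨Finset.mem_univ _, by rw [hmatch]; exact hc₀⟩
  have hxks : x = u ks := by
    rw [hxu, ← Finset.add_sum_erase _ _ hks]
    have : ∑ k' ∈ T₀.erase ks, u k' = 0 := by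
      refine Finset.sum_eq_zero fun k' hk' => ?_
      exact hzero k' (Finset.mem_of_mem_erase hk') (Finset.ne_of_mem_erase hk')
    rw [this, add_zero]
  rw [hxks]
  exact hu ks

section GHadFacts

/-- The rows of the Hadamard generator matrix, as vectors. -/
def gg (i : ℕ) : Fin (2 ^ (i + 1) - 1) → Fin (i + 1) → ZMod 2 :=
  fun k j => GHad i k j

lemma gg_testBit_eq {i : ℕ} {k k' : Fin (2 ^ (i + 1) - 1)} (h : gg i k = gg i k') :
    2 ^ (i + 1) - (k.val + 1) = 2 ^ (i + 1) - (k'.val + 1) := by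
  apply Nat.eq_of_testBit_eq
  intro t
  rcases le_or_gt t i with ht | ht
  · have hj : i - (⟨i - t, by omega⟩ : Fin (i + 1)).val = t := by simp; omega
    have := congrFun h (⟨i - t, by omega⟩ : Fin (i + 1))
    simp only [gg, GHad, hj] at this
    by_cases h1 : Nat.testBit (2 ^ (i + 1) - (k.val + 1)) t <;>
      by_cases h2 : Nat.testBit (2 ^ (i + 1) - (k'.val + 1)) t <;>
      simp [h1, h2] at this ⊢ <;> exact absurd this (by decide)
  · have hb : ∀ kk : Fin (2 ^ (i + 1) - 1),
        Nat.testBit (2 ^ (i + 1) - (kk.val + 1)) t = false := by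
      intro kk
      apply Nat.testBit_eq_false_of_lt
      calc 2 ^ (i + 1) - (kk.val + 1) < 2 ^ (i + 1) := by
            have : 1 ≤ 2 ^ (i + 1) := Nat.one_le_two_pow
            omega
        _ ≤ 2 ^ t := Nat.pow_le_pow_right (by norm_num) ht
    rw [hb k, hb k']

lemma gg_inj (i : ℕ) : Function.Injective (gg i) := by
  intro k k' h
  have h2 : 1 ≤ 2 ^ (i + 1) := Nat.one_le_two_pow
  have hk := k.isLt
  have hk' := k'.isLt
  have := gg_testBit_eq h
  ext
  omega

lemma gg_ne_zero {i : ℕ} (k : Fin (2 ^ (i + 1) - 1)) : gg i k ≠ 0 := by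
  intro h
  have h2 : 1 ≤ 2 ^ (i + 1) := Nat.one_le_two_pow
  have hk := k.isLt
  have hzero : 2 ^ (i + 1) - (k.val + 1) = 0 := by
    apply Nat.eq_of_testBit_eq
    intro t
    rw [Nat.zero_testBit]
    rcases le_or_gt t i with ht | ht
    · have hj : i - (⟨i - t, by omega⟩ : Fin (i + 1)).val = t := by simp; omega
      have := congrFun h (⟨i - t, by omega⟩ : Fin (i + 1))
      simp only [gg, GHad, hj, Pi.zero_apply] at this
      by_cases h1 : Nat.testBit (2 ^ (i + 1) - (k.val + 1)) t
      · rw [if_pos h1] at this; exact absurd this (by decide)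
      · simp [h1]
    · apply Nat.testBit_eq_false_of_lt
      calc 2 ^ (i + 1) - (k.val + 1) < 2 ^ (i + 1) := by omega
        _ ≤ 2 ^ t := Nat.pow_le_pow_right (by norm_num) ht
  omega

lemma gg_surj {i : ℕ} (v : Fin (i + 1) → ZMod 2) (hv : v ≠ 0) : ∃ k, gg i k = v := by
  classical
  let g' : Fin (2 ^ (i + 1) - 1) → {w : Fin (i + 1) → ZMod 2 // ¬ w = 0} :=
    fun k => ⟨gg i k, gg_ne_zero k⟩
  have hinj : Function.Injective g' := by
    intro k k' h
    exact gg_inj i (congrArg Subtype.val h)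
  have hcard : Fintype.card (Fin (2 ^ (i + 1) - 1))
      = Fintype.card {w : Fin (i + 1) → ZMod 2 // ¬ w = 0} := by
    rw [Fintype.card_subtype_compl, Fintype.card_subtype_eq (0 : Fin (i + 1) → ZMod 2)]
    simp [Fintype.card_fun, ZMod.card]
  have hbij : Function.Bijective g' :=
    (Fintype.bijective_iff_injective_and_card g').mpr ⟨hinj, hcard⟩
  obtain ⟨k, hk⟩ := hbij.2 ⟨v, hv⟩
  exact ⟨k, congrArg Subtype.val hk⟩

end GHadFacts

section RowHelpers

lemma row_sub (A B : Matrix (Fin n) (Fin n) F) (a : Fin n) : (A - B) a = A a - B a := by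
  funext c; simp [Matrix.sub_apply]

lemma row_sum {m : ℕ} (S : Finset (Fin m)) (X : Fin m → Matrix (Fin n) (Fin n) F)
    (a : Fin n) : (∑ k ∈ S, X k) a = ∑ k ∈ S, X k a := by
  funext c
  simp [Matrix.sum_apply, Finset.sum_apply]

end RowHelpers

end Stmt7Aux

open Stmt7Aux Finset Submodule in
/-- (Uniqueness of the minimal matrix set of a face.) Let
`M₁, …, M_{2^{i+1}−1}` and `K₁, …, K_{2^{i+1}−1}` be families of rank-`2^{r−i}`
matrices in `F_q^{n×n}`, each family having independent row spaces and independent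
column spaces. If the `F₂`-spans of `{M̂₀, …, M̂_i}` and `{K̂₀, …, K̂_i}` agree,
where `M̂_j = Σ_{k : G_Had^{(i)}(k,j)=1} M_k` (and similarly for `K̂`), then the two
families coincide as sets. -/
theorem stmt7 (r b n i : ℕ) (hr : 1 ≤ r) (hb : 1 ≤ b) (hn : 2 ^ (r + 1) ≤ n)
    (hi : i + 1 ≤ r)
    (M K : Fin (2 ^ (i + 1) - 1) → Matrix (Fin n) (Fin n) (GaloisField 2 b))
    (hMrank : ∀ k, (M k).rank = 2 ^ (r - i))
    (hKrank : ∀ k, (K k).rank = 2 ^ (r - i))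
    (hMrow : ∀ k, rowSpace (M k) ⊓ (⨆ (k') (_ : k' ≠ k), rowSpace (M k')) = ⊥)
    (hMcol : ∀ k, colSpace (M k) ⊓ (⨆ (k') (_ : k' ≠ k), colSpace (M k')) = ⊥)
    (hKrow : ∀ k, rowSpace (K k) ⊓ (⨆ (k') (_ : k' ≠ k), rowSpace (K k')) = ⊥)
    (hKcol : ∀ k, colSpace (K k) ⊓ (⨆ (k') (_ : k' ≠ k), colSpace (K k')) = ⊥)
    (hspan :
      Submodule.span (ZMod 2) (Set.range (fun j : Fin (i + 1) =>
        ∑ k ∈ Finset.univ.filter (fun k => GHad i k j = 1), M k)) =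
      Submodule.span (ZMod 2) (Set.range (fun j : Fin (i + 1) =>
        ∑ k ∈ Finset.univ.filter (fun k => GHad i k j = 1), K k))) :
    Set.range M = Set.range K := by
  classical
  -- nonzero matrices
  have hMnz : ∀ k, M k ≠ 0 := by
    intro k h
    have h1 := hMrank k
    rw [h, Matrix.rank_zero] at h1
    exact absurd h1.symm (Nat.two_pow_pos (r - i)).ne'
  have hKnz : ∀ k, K k ≠ 0 := by
    intro k h
    have h1 := hKrank k
    rw [h, Matrix.rank_zero] at h1
    exact absurd h1.symm (Nat.two_pow_pos (r - i)).ne'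
  -- rearrangement of weighted sums of the hatted matrices
  have rearr : ∀ (X : Fin (2 ^ (i + 1) - 1) → Matrix (Fin n) (Fin n) (GaloisField 2 b))
      (c : Fin (i + 1) → ZMod 2),
      (∑ j, c j • (∑ k ∈ Finset.univ.filter (fun k => GHad i k j = 1), X k))
        = ∑ k ∈ Finset.univ.filter (fun k => dotProduct (gg i k) c = 1), X k := by
    intro X c
    calc (∑ j, c j • (∑ k ∈ Finset.univ.filter (fun k => GHad i k j = 1), X k))
        = ∑ j, ∑ k, (GHad i k j * c j) • X k := by
          refine Finset.sum_congr rfl fun j _ => ?_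
          rw [show (∑ k ∈ Finset.univ.filter (fun k => GHad i k j = 1), X k)
              = ∑ k, GHad i k j • X k from (zmod2_sum_smul (fun k => GHad i k j) X).symm,
            Finset.smul_sum]
          exact Finset.sum_congr rfl fun k _ => by rw [smul_smul, mul_comm]
      _ = ∑ k, ∑ j, (GHad i k j * c j) • X k := Finset.sum_comm
      _ = ∑ k, (dotProduct (gg i k) c) • X k := by
          refine Finset.sum_congr rfl fun k _ => ?_
          exact (Finset.sum_smul).symm
      _ = ∑ k ∈ Finset.univ.filter (fun k => dotProduct (gg i k) c = 1), X k :=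
          zmod2_sum_smul _ X
  -- swap lemma for double sums
  have swapL : ∀ (A : Fin (i + 1) → Matrix (Fin n) (Fin n) (GaloisField 2 b))
      (c : Fin (i + 1) → ZMod 2) (d : Fin (i + 1) → Fin (i + 1) → ZMod 2),
      (∑ j, c j • ∑ j', d j j' • A j') = ∑ j', (∑ j, c j * d j j') • A j' := by
    intro A c d
    calc (∑ j, c j • ∑ j', d j j' • A j')
        = ∑ j, ∑ j', (c j * d j j') • A j' := by
          refine Finset.sum_congr rfl fun j _ => ?_
          rw [Finset.smul_sum]
          exact Finset.sum_congr rfl fun j' _ => smul_smul _ _ _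
      _ = ∑ j', ∑ j, (c j * d j j') • A j' := Finset.sum_comm
      _ = ∑ j', (∑ j, c j * d j j') • A j' :=
          Finset.sum_congr rfl fun j' _ => (Finset.sum_smul).symm
  -- coefficients expressing each hatted K in terms of hatted M's, and conversely
  have hKexp : ∀ j : Fin (i + 1), ∃ c : Fin (i + 1) → ZMod 2,
      (∑ j', c j' • (∑ k ∈ Finset.univ.filter (fun k => GHad i k j' = 1), M k))
        = ∑ k ∈ Finset.univ.filter (fun k => GHad i k j = 1), K k := by
    intro j
    refine (mem_span_range_iff_exists_fun (ZMod 2)).mp ?_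
    rw [hspan]
    exact Submodule.subset_span ⟨j, rfl⟩
  have hMexp : ∀ j : Fin (i + 1), ∃ c : Fin (i + 1) → ZMod 2,
      (∑ j', c j' • (∑ k ∈ Finset.univ.filter (fun k => GHad i k j' = 1), K k))
        = ∑ k ∈ Finset.univ.filter (fun k => GHad i k j = 1), M k := by
    intro j
    refine (mem_span_range_iff_exists_fun (ZMod 2)).mp ?_
    rw [← hspan]
    exact Submodule.subset_span ⟨j, rfl⟩
  choose cM hcM using hKexp
  choose cK hcK using hMexp
  -- the linear maps L, L' and their transposes
  set L : (Fin (i + 1) → ZMod 2) → Fin (i + 1) → ZMod 2 :=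
    fun c j' => ∑ j, c j * cM j j' with hLdef
  set L' : (Fin (i + 1) → ZMod 2) → Fin (i + 1) → ZMod 2 :=
    fun c j' => ∑ j, c j * cK j j' with hL'def
  set Lt : (Fin (i + 1) → ZMod 2) → Fin (i + 1) → ZMod 2 :=
    fun w j => ∑ j', w j' * cM j j' with hLtdef
  set Lt' : (Fin (i + 1) → ZMod 2) → Fin (i + 1) → ZMod 2 :=
    fun w j => ∑ j', w j' * cK j j' with hLt'def
  -- star identities
  have hstarM : ∀ c, (∑ k ∈ Finset.univ.filter
        (fun k => dotProduct (gg i k) c = 1), K k)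
      = ∑ k ∈ Finset.univ.filter
        (fun k => dotProduct (gg i k) (L c) = 1), M k := by
    intro c
    rw [← rearr K c, ← rearr M (L c)]
    calc (∑ j, c j • (∑ k ∈ Finset.univ.filter (fun k => GHad i k j = 1), K k))
        = ∑ j, c j • (∑ j', cM j j' •
            (∑ k ∈ Finset.univ.filter (fun k => GHad i k j' = 1), M k)) := by
          exact Finset.sum_congr rfl fun j _ => by rw [hcM j]
      _ = ∑ j', (∑ j, c j * cM j j') •
            (∑ k ∈ Finset.univ.filter (fun k => GHad i k j' = 1), M k) := swapL _ _ _
      _ = ∑ j', (L c) j' •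
            (∑ k ∈ Finset.univ.filter (fun k => GHad i k j' = 1), M k) := rfl
  have hstarK : ∀ c, (∑ k ∈ Finset.univ.filter
        (fun k => dotProduct (gg i k) c = 1), M k)
      = ∑ k ∈ Finset.univ.filter
        (fun k => dotProduct (gg i k) (L' c) = 1), K k := by
    intro c
    rw [← rearr M c, ← rearr K (L' c)]
    calc (∑ j, c j • (∑ k ∈ Finset.univ.filter (fun k => GHad i k j = 1), M k))
        = ∑ j, c j • (∑ j', cK j j' •
            (∑ k ∈ Finset.univ.filter (fun k => GHad i k j' = 1), K k)) := by
          exact Finset.sum_congr rfl fun j _ => by rw [hcK j]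
      _ = ∑ j', (∑ j, c j * cK j j') •
            (∑ k ∈ Finset.univ.filter (fun k => GHad i k j' = 1), K k) := swapL _ _ _
      _ = ∑ j', (L' c) j' •
            (∑ k ∈ Finset.univ.filter (fun k => GHad i k j' = 1), K k) := rfl
  -- injectivity of weighted sums (for each family)
  have Tinj : ∀ (X : Fin (2 ^ (i + 1) - 1) → Matrix (Fin n) (Fin n) (GaloisField 2 b)),
      (∀ k, X k ≠ 0) →
      (∀ k, rowSpace (X k) ⊓ (⨆ (k') (_ : k' ≠ k), rowSpace (X k')) = ⊥) →
      ∀ (ε ε' : Fin (2 ^ (i + 1) - 1) → ZMod 2),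
      (∑ k, ε k • X k) = (∑ k, ε' k • X k) → ε = ε' := by
    intro X hnz hrow ε ε' h
    by_contra hne
    obtain ⟨k, hkne⟩ := Function.ne_iff.mp hne
    have hδ : (∑ k, (ε k - ε' k) • X k) = 0 := by
      have : (∑ k, (ε k - ε' k) • X k) = (∑ k, ε k • X k) - ∑ k, ε' k • X k := by
        rw [← Finset.sum_sub_distrib]
        exact Finset.sum_congr rfl fun k _ => sub_smul _ _ _
      rw [this, h, sub_self]
    have hδk : ε k - ε' k = 1 := by
      have h1 : ∀ a b : ZMod 2, a ≠ b → a - b = 1 := by decide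
      exact h1 _ _ hkne
    have hXk : X k + ∑ k' ∈ Finset.univ.erase k, (ε k' - ε' k') • X k' = 0 := by
      have h2 : ((ε k - ε' k) • X k) + ∑ k' ∈ Finset.univ.erase k, (ε k' - ε' k') • X k'
          = ∑ k', (ε k' - ε' k') • X k' :=
        Finset.add_sum_erase Finset.univ (fun k' => (ε k' - ε' k') • X k') (Finset.mem_univ k)
      rw [hδk, one_smul] at h2
      rw [h2, hδ]
    have hrowle : rowSpace (X k) ≤ ⨆ (k') (_ : k' ≠ k), rowSpace (X k') := by
      rw [rowSpace, Submodule.span_le]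
      rintro _ ⟨a, rfl⟩
      show X k a ∈ _
      have h3 : X k a = - ∑ k' ∈ Finset.univ.erase k, (ε k' - ε' k') • X k' a := by
        have h4 := congrFun hXk a
        change X k a + (∑ k' ∈ Finset.univ.erase k, (ε k' - ε' k') • X k') a = 0 at h4
        rw [eq_neg_of_add_eq_zero_left h4, row_sum]
        congr 1
      rw [h3]
      refine Submodule.neg_mem _ (Submodule.sum_mem _ fun k' hk' => ?_)
      have hne' : k' ≠ k := Finset.ne_of_mem_erase hk'
      rcases zmod2_cases (ε k' - ε' k') with h5 | h5
      · rw [h5, zero_smul]; exact Submodule.zero_mem _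
      · rw [h5, one_smul]
        exact Submodule.mem_iSup_of_mem k' (Submodule.mem_iSup_of_mem hne'
          (Submodule.subset_span ⟨a, rfl⟩))
    have hbot : rowSpace (X k) = ⊥ :=
      le_bot_iff.mp ((hrow k) ▸ le_inf le_rfl hrowle)
    apply hnz k
    ext a cc
    have : X k a ∈ rowSpace (X k) := Submodule.subset_span ⟨a, rfl⟩
    rw [hbot, Submodule.mem_bot] at this
    exact congrFun this cc
  -- single vectors are nonzero
  have hsingle : ∀ j : Fin (i + 1), (Pi.single j 1 : Fin (i + 1) → ZMod 2) ≠ 0 := by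
    intro j h
    have h1 : (1 : ZMod 2) = 0 := by
      have := congrFun h j
      rwa [Pi.single_eq_same, Pi.zero_apply] at this
    exact absurd h1 (by decide)
  -- pointwise equality from dot products against all g's
  have dotAll : ∀ v w : Fin (i + 1) → ZMod 2,
      (∀ k, dotProduct (gg i k) v = dotProduct (gg i k) w) → v = w := by
    intro v w hvw
    funext j
    obtain ⟨k, hk⟩ := gg_surj (Pi.single j 1) (hsingle j)
    have := hvw k
    rw [hk, single_dotProduct, single_dotProduct, one_mul, one_mul] at this
    exact this
  -- L' ∘ L = id and L ∘ L' = id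
  have hLL' : ∀ c, L' (L c) = c := by
    intro c
    have h1 : (∑ k, dotProduct (gg i k) (L' (L c)) • K k)
        = ∑ k, dotProduct (gg i k) c • K k := by
      rw [zmod2_sum_smul, zmod2_sum_smul, hstarM c, hstarK (L c)]
    have h2 := Tinj K hKnz hKrow _ _ h1
    exact dotAll (L' (L c)) c fun k => congrFun h2 k
  have hL'L : ∀ c, L (L' c) = c := by
    intro c
    have h1 : (∑ k, dotProduct (gg i k) (L (L' c)) • M k)
        = ∑ k, dotProduct (gg i k) c • M k := by
      rw [zmod2_sum_smul, zmod2_sum_smul, hstarK c, hstarM (L' c)]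
    have h2 := Tinj M hMnz hMrow _ _ h1
    exact dotAll (L (L' c)) c fun k => congrFun h2 k
  -- transpose identities
  have hLtdot : ∀ w c, dotProduct w (L c) = dotProduct (Lt w) c := by
    intro w c
    show (∑ j', w j' * ∑ j, c j * cM j j') = ∑ j, (∑ j', w j' * cM j j') * c j
    calc (∑ j', w j' * ∑ j, c j * cM j j')
        = ∑ j', ∑ j, w j' * cM j j' * c j := by
          refine Finset.sum_congr rfl fun j' _ => ?_
          rw [Finset.mul_sum]
          exact Finset.sum_congr rfl fun j _ => by ring
      _ = ∑ j, ∑ j', w j' * cM j j' * c j := Finset.sum_comm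
      _ = ∑ j, (∑ j', w j' * cM j j') * c j :=
          Finset.sum_congr rfl fun j _ => (Finset.sum_mul _ _ _).symm
  have hLt'dot : ∀ w c, dotProduct w (L' c) = dotProduct (Lt' w) c := by
    intro w c
    show (∑ j', w j' * ∑ j, c j * cK j j') = ∑ j, (∑ j', w j' * cK j j') * c j
    calc (∑ j', w j' * ∑ j, c j * cK j j')
        = ∑ j', ∑ j, w j' * cK j j' * c j := by
          refine Finset.sum_congr rfl fun j' _ => ?_
          rw [Finset.mul_sum]
          exact Finset.sum_congr rfl fun j _ => by ring
      _ = ∑ j, ∑ j', w j' * cK j j' * c j := Finset.sum_comm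
      _ = ∑ j, (∑ j', w j' * cK j j') * c j :=
          Finset.sum_congr rfl fun j _ => (Finset.sum_mul _ _ _).symm
  -- dot against all vectors determines
  have dotAllVec : ∀ v w : Fin (i + 1) → ZMod 2,
      (∀ c, dotProduct v c = dotProduct w c) → v = w := by
    intro v w hvw
    funext j
    have := hvw (Pi.single j 1)
    rwa [dotProduct_single, dotProduct_single, mul_one, mul_one] at this
  have hLtLt' : ∀ w, Lt (Lt' w) = w := by
    intro w
    apply dotAllVec
    intro c
    rw [← hLtdot, ← hLt'dot, hLL']
  have hLt'Lt : ∀ w, Lt' (Lt w) = w := by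
    intro w
    apply dotAllVec
    intro c
    rw [← hLt'dot, ← hLtdot, hL'L]
  -- construction of σ
  have hLt'zero : Lt' (0 : Fin (i + 1) → ZMod 2) = 0 := by
    funext j
    show (∑ j', (0 : ZMod 2) * cK j j') = 0
    simp
  have hσex : ∀ k, ∃ ks, gg i ks = Lt' (gg i k) := by
    intro k
    apply gg_surj
    intro h0
    apply gg_ne_zero k
    rw [← hLtLt' (gg i k), h0]
    apply dotAllVec
    intro c
    show dotProduct (Lt 0) c = dotProduct 0 c
    rw [← hLtdot]
    simp [zero_dotProduct]
  choose σ hσeq using hσex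
  have hσinj : Function.Injective σ := by
    intro k1 k2 h
    have h1 : Lt' (gg i k1) = Lt' (gg i k2) := by rw [← hσeq k1, ← hσeq k2, h]
    have h2 : Lt (Lt' (gg i k1)) = Lt (Lt' (gg i k2)) := by rw [h1]
    rw [hLtLt', hLtLt'] at h2
    exact gg_inj i h2
  have hmatch : ∀ k c, dotProduct (gg i (σ k)) (L c) = dotProduct (gg i k) c := by
    intro k c
    rw [hLtdot, hσeq, hLtLt']
  have hmatch' : ∀ k c,
      dotProduct (gg i k) (L' c) = dotProduct (gg i (σ k)) c := by
    intro k c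
    rw [hLt'dot, ← hσeq]
  -- existence of c with ⟨g k, c⟩ = 1
  have hex : ∀ k, ∃ c, dotProduct (gg i k) c = 1 := by
    intro k
    obtain ⟨j, hj⟩ : ∃ j, gg i k j ≠ 0 := by
      by_contra hcon
      push_neg at hcon
      exact gg_ne_zero k (funext hcon)
    exact ⟨Pi.single j 1, by
      rw [dotProduct_single, mul_one, (zmod2_cases _).resolve_left hj]⟩
  -- separations
  have hsepKM : ∀ k k'', k'' ≠ σ k →
      ∃ c, dotProduct (gg i k) c = 1 ∧
        dotProduct (gg i k'') (L c) = 0 := by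
    intro k k'' hne
    by_contra hcon
    push_neg at hcon
    have hall : ∀ c, dotProduct (gg i k) c = 1 →
        dotProduct (Lt (gg i k'')) c = 1 := by
      intro c hc
      have h1 := hcon c hc
      rw [hLtdot] at h1
      exact (zmod2_cases _).resolve_left h1
    have h2 := sep_vec (gg_ne_zero k) hall
    apply hne
    apply gg_inj i
    rw [hσeq, ← h2, hLt'Lt]
  have hsepMK : ∀ k k₁, k₁ ≠ k →
      ∃ c, dotProduct (gg i (σ k)) c = 1 ∧
        dotProduct (gg i k₁) (L' c) = 0 := by
    intro k k₁ hne
    by_contra hcon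
    push_neg at hcon
    have hall : ∀ c, dotProduct (gg i (σ k)) c = 1 →
        dotProduct (Lt' (gg i k₁)) c = 1 := by
      intro c hc
      have h1 := hcon c hc
      rw [hLt'dot] at h1
      exact (zmod2_cases _).resolve_left h1
    have h2 := sep_vec (gg_ne_zero (σ k)) hall
    rw [hσeq] at h2
    apply hne
    apply gg_inj i
    have h3 : Lt (Lt' (gg i k₁)) = Lt (Lt' (gg i k)) := by rw [h2]
    rwa [hLtLt', hLtLt'] at h3
  -- row space equality
  have hrowEq : ∀ k, rowSpace (K k) = rowSpace (M (σ k)) := by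
    intro k
    apply le_antisymm
    · exact rowSpace_le_of_spans (gg i) M K L hstarM hKcol hMrow k (σ k)
        (hmatch k) (hsepKM k) (hex k)
    · exact rowSpace_le_of_spans (gg i) K M L' hstarK hMcol hKrow (σ k) k
        (hmatch' k) (hsepMK k) (hex (σ k))
  -- final: K k = M (σ k)
  have hKM : ∀ k, K k = M (σ k) := by
    intro k
    obtain ⟨c₀, hc₀⟩ := hex k
    have hid := hstarM c₀
    have hkTK : k ∈ Finset.univ.filter
        (fun k' => dotProduct (gg i k') c₀ = 1) := by
      simp only [Finset.mem_filter]
      exact ⟨Finset.mem_univ _, hc₀⟩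
    have hσTM : σ k ∈ Finset.univ.filter
        (fun k'' => dotProduct (gg i k'') (L c₀) = 1) := by
      simp only [Finset.mem_filter]
      exact ⟨Finset.mem_univ _, by rw [hmatch k c₀]; exact hc₀⟩
    have h5 : K k + ∑ k' ∈ (Finset.univ.filter
          (fun k' => dotProduct (gg i k') c₀ = 1)).erase k, K k'
        = M (σ k) + ∑ k'' ∈ (Finset.univ.filter
          (fun k'' => dotProduct (gg i k'') (L c₀) = 1)).erase (σ k), M k'' := by
      rw [Finset.add_sum_erase _ _ hkTK, Finset.add_sum_erase _ _ hσTM]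
      exact hid
    have h7 : K k - M (σ k)
        = (∑ k'' ∈ (Finset.univ.filter
            (fun k'' => dotProduct (gg i k'') (L c₀) = 1)).erase (σ k), M k'')
          - ∑ k' ∈ (Finset.univ.filter
            (fun k' => dotProduct (gg i k') c₀ = 1)).erase k, K k' := by
      rw [sub_eq_sub_iff_add_eq_add, h5, add_comm]
    have hrow0 : ∀ a, (K k - M (σ k)) a = 0 := by
      intro a
      have hmemL : (K k - M (σ k)) a ∈ rowSpace (M (σ k)) := by
        rw [row_sub]
        refine Submodule.sub_mem _ ?_ (Submodule.subset_span ⟨a, rfl⟩)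
        rw [← hrowEq k]
        exact Submodule.subset_span ⟨a, rfl⟩
      have hmemR : (K k - M (σ k)) a ∈ ⨆ (k') (_ : k' ≠ σ k), rowSpace (M k') := by
        rw [h7, row_sub, row_sum, row_sum]
        refine Submodule.sub_mem _ ?_ ?_
        · refine Submodule.sum_mem _ fun k'' hk'' => ?_
          exact Submodule.mem_iSup_of_mem k'' (Submodule.mem_iSup_of_mem
            (Finset.ne_of_mem_erase hk'') (Submodule.subset_span ⟨a, rfl⟩))
        · refine Submodule.sum_mem _ fun k' hk' => ?_
          have hne' : σ k' ≠ σ k := fun h => (Finset.ne_of_mem_erase hk') (hσinj h)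
          refine Submodule.mem_iSup_of_mem (σ k') (Submodule.mem_iSup_of_mem hne' ?_)
          rw [← hrowEq k']
          exact Submodule.subset_span ⟨a, rfl⟩
      have := (hMrow (σ k)) ▸ Submodule.mem_inf.mpr ⟨hmemL, hmemR⟩
      simpa using this
    have : K k - M (σ k) = 0 := by
      ext a cc
      have := congrFun (hrow0 a) cc
      simpa [Matrix.sub_apply] using this
    exact sub_eq_zero.mp this
  -- conclusion
  have hKcomp : K = M ∘ σ := funext fun k => hKM k
  have hσbij : Function.Bijective σ := Finite.injective_iff_bijective.mp hσinj
  rw [hKcomp, Set.range_comp, Function.Surjective.range_eq hσbij.2, Set.image_univ]
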